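/- Let f ∈ ℝ[x_1,...,x_n] with deg f < 2d, and let λ_0, λ_1, ..., λ_n ≥ 0 be such that the polynomial f(x) + λ_0 + Σ_{i=1}^n λ_i x_i^{2d} is a sum of squares of polynomials of degree at most 2d. Then f + Σ_{i=0}^n λ_i belongs to the truncated pre-ordering 𝒯(1±x_1,...,1±x_n)_{2d}. -/

import Mathlib

open MvPolynomial

/-- Truncated pre-ordering generated by the polynomials `g i`, with degree bound `r`. -/
def truncPre {σ ι : Type} [Fintype ι] [DecidableEq ι]
    (g : ι → MvPolynomial σ ℝ) (r : ℕ) : Set (MvPolynomial σ ℝ) :=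
  {p | ∃ s : Finset ι → MvPolynomial σ ℝ,
    (∀ I, IsSumSq (s I)) ∧
    (∀ I : Finset ι, (s I * ∏ i ∈ I, g i).totalDegree ≤ r) ∧
    p = ∑ I : Finset ι, s I * ∏ i ∈ I, g i}

/-- The `2n` generators `1 ± x_i`, indexed by a variable together with a sign. -/
noncomputable def pmGen {σ : Type} (v : σ × Bool) : MvPolynomial σ ℝ :=
  if v.2 then 1 + MvPolynomial.X v.1 else 1 - MvPolynomial.X v.1

lemma isSumSq_finset_sum' {R : Type*} [AddCommMonoid R] [Mul R] {α : Type*} [DecidableEq α]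
    (s : Finset α) (g : α → R) (h : ∀ a ∈ s, IsSumSq (g a)) :
    IsSumSq (∑ a ∈ s, g a) := by
  induction s using Finset.induction with
  | empty => simpa using IsSumSq.zero
  | insert _ _ hni ih =>
      rw [Finset.sum_insert hni]
      exact IsSumSq.add (h _ (Finset.mem_insert_self _ _))
        (ih fun a ha => h a (Finset.mem_insert_of_mem ha))

lemma pmGen_totalDegree {σ : Type} (v : σ × Bool) : (pmGen v).totalDegree ≤ 1 := by
  unfold pmGen
  split
  · exact (totalDegree_add _ _).trans (by simp [totalDegree_X])
  · rw [sub_eq_add_neg]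
    refine (totalDegree_add _ _).trans ?_
    refine max_le (by simp) ?_
    rw [totalDegree_neg]
    simp [totalDegree_X]

/-- If `deg f < 2d`, `λ₀, λ_1, ..., λ_n ≥ 0`, and `f + λ₀ + ∑_i λ_i x_i^{2d}` is a
sum of squares of polynomials of degree at most `2d`, then
`f + ∑_{i=0}^n λ_i ∈ 𝒯(1±x_1,...,1±x_n)_{2d}`. -/
theorem lasserre_sos_approx_implies_truncPre (n d : ℕ) (f : MvPolynomial (Fin n) ℝ)
    (hdf : f.totalDegree < 2 * d)
    (lam0 : ℝ) (lam : Fin n → ℝ) (hlam0 : 0 ≤ lam0) (hlam : ∀ i, 0 ≤ lam i)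
    (hsos : IsSumSq (f + MvPolynomial.C lam0 +
        ∑ i : Fin n, MvPolynomial.C (lam i) * MvPolynomial.X i ^ (2 * d)))
    (hdeg : (f + MvPolynomial.C lam0 +
        ∑ i : Fin n, MvPolynomial.C (lam i) * MvPolynomial.X i ^ (2 * d)).totalDegree
          ≤ 2 * d) :
    f + MvPolynomial.C (lam0 + ∑ i : Fin n, lam i) ∈
      truncPre (pmGen (σ := Fin n)) (2 * d) := by
  classical
  have hd : 1 ≤ d := by
    rcases Nat.eq_zero_or_pos d with h | h
    · subst h; simp at hdf
    · exact h
  set P : MvPolynomial (Fin n) ℝ :=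
    f + MvPolynomial.C lam0 + ∑ i : Fin n, MvPolynomial.C (lam i) * X i ^ (2 * d) with hP
  set σp : Fin n → MvPolynomial (Fin n) ℝ :=
    fun j => ∑ k ∈ Finset.range d, X j ^ (2 * k) with hσp
  set pair : Fin n → Finset (Fin n × Bool) := fun j => {(j, true), (j, false)} with hpair
  have pair_ne : ∀ j, pair j ≠ ∅ := by
    intro j h
    have : (j, true) ∈ pair j := by simp [hpair]
    rw [h] at this; simp at this
  have pair_inj : ∀ j j' : Fin n, pair j = pair j' → j = j' := by
    intro j j' h
    have : (j, true) ∈ pair j' := by rw [← h]; simp [hpair]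
    simp [hpair] at this
    tauto
  -- key identity
  have key : ∀ j : Fin n, σp j * ∏ i ∈ pair j, pmGen i
      = 1 - X j ^ (2 * d) := by
    intro j
    have hne : ((j, true) : Fin n × Bool) ≠ (j, false) := by simp
    rw [hpair]
    simp only
    rw [Finset.prod_pair hne]
    have h1 : pmGen ((j, true) : Fin n × Bool) * pmGen (j, false)
        = -(X j ^ 2 - 1) := by
      unfold pmGen; simp; ring
    rw [h1]
    have h2 : σp j = ∑ k ∈ Finset.range d, (X j ^ 2) ^ k := by
      rw [hσp]; simp [← pow_mul, mul_comm]
    rw [h2, mul_neg, geom_sum_mul, ← pow_mul]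
    ring
  refine ⟨fun I => (if I = ∅ then P else 0)
      + ∑ j : Fin n, (if I = pair j then MvPolynomial.C (lam j) * σp j else 0), ?_, ?_, ?_⟩
  · intro I
    refine IsSumSq.add ?_ (isSumSq_finset_sum' _ _ fun j _ => ?_)
    · split
      · exact hsos
      · exact IsSumSq.zero
    · split
      · have : MvPolynomial.C (lam j) * σp j
            = ∑ k ∈ Finset.range d,
                (MvPolynomial.C (Real.sqrt (lam j)) * X j ^ k)
                  * (MvPolynomial.C (Real.sqrt (lam j)) * X j ^ k) := by
          rw [hσp, Finset.mul_sum]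
          refine Finset.sum_congr rfl fun k _ => ?_
          have : (MvPolynomial.C (Real.sqrt (lam j)) : MvPolynomial (Fin n) ℝ)
              * MvPolynomial.C (Real.sqrt (lam j)) = MvPolynomial.C (lam j) := by
            rw [← map_mul, Real.mul_self_sqrt (hlam j)]
          rw [show (MvPolynomial.C (Real.sqrt (lam j)) * X j ^ k)
              * (MvPolynomial.C (Real.sqrt (lam j)) * X j ^ k)
              = (MvPolynomial.C (Real.sqrt (lam j)) * MvPolynomial.C (Real.sqrt (lam j)))
                * (X j ^ k * X j ^ k) by ring, this, ← pow_add, two_mul]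
        rw [this]
        exact IsSumSq.sum_mul_self _ _
      · exact IsSumSq.zero
  · intro I
    beta_reduce
    by_cases hI : I = ∅
    · subst hI
      have : ∀ j : Fin n, ((∅ : Finset (Fin n × Bool)) = pair j) = False := by
        intro j; simp [Ne.symm (pair_ne j)]
      simp only [if_pos rfl, this, if_false, Finset.sum_const_zero, add_zero,
        Finset.prod_empty, mul_one]
      exact hdeg
    · by_cases hI2 : ∃ j, I = pair j
      · obtain ⟨j0, rfl⟩ := hI2
        have hcollapse : (∑ j : Fin n,
            (if pair j0 = pair j then MvPolynomial.C (lam j) * σp j else 0))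
            = MvPolynomial.C (lam j0) * σp j0 := by
          rw [Finset.sum_eq_single j0]
          · simp
          · intro b _ hb
            rw [if_neg]
            intro h
            exact hb (pair_inj _ _ h).symm
          · simp
        rw [if_neg hI, hcollapse, zero_add]
        refine (totalDegree_mul _ _).trans ?_
        have h1 : (MvPolynomial.C (lam j0) * σp j0).totalDegree ≤ 2 * (d - 1) := by
          refine (totalDegree_mul _ _).trans ?_
          have : (σp j0).totalDegree ≤ 2 * (d - 1) := by
            simp only [hσp]
            refine (totalDegree_finset_sum _ _).trans (Finset.sup_le fun k hk => ?_)
            refine (totalDegree_pow _ _).trans ?_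
            rw [totalDegree_X, mul_one]
            have := Finset.mem_range.mp hk
            omega
          simpa using this
        have h2 : (∏ i ∈ pair j0, pmGen i).totalDegree ≤ 2 := by
          have hne : ((j0, true) : Fin n × Bool) ≠ (j0, false) := by simp
          rw [hpair]
          simp only
          rw [Finset.prod_pair hne]
          refine (totalDegree_mul _ _).trans ?_
          have := pmGen_totalDegree ((j0, true) : Fin n × Bool)
          have := pmGen_totalDegree ((j0, false) : Fin n × Bool)
          omega
        omega
      · push_neg at hI2
        have : ∀ j : Fin n, (I = pair j) = False := by
          intro j; simp [hI2 j]
        have hz : ((if I = ∅ then P else 0)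
            + ∑ j : Fin n, if I = pair j then MvPolynomial.C (lam j) * σp j else 0) = 0 := by
          rw [if_neg hI]
          simp [this]
        rw [hz, zero_mul, totalDegree_zero]
        exact Nat.zero_le _
  · -- the sum identity
    have expand : (∑ I : Finset (Fin n × Bool),
        ((if I = ∅ then P else 0)
          + ∑ j : Fin n, (if I = pair j then MvPolynomial.C (lam j) * σp j else 0))
          * ∏ i ∈ I, pmGen i)
        = P + ∑ j : Fin n, MvPolynomial.C (lam j) * (1 - X j ^ (2 * d)) := by
      rw [Finset.sum_congr rfl (fun I _ => add_mul _ _ _), Finset.sum_add_distrib]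
      congr 1
      · rw [show (∑ I : Finset (Fin n × Bool),
            (if I = ∅ then P else 0) * ∏ i ∈ I, pmGen i)
            = ∑ I : Finset (Fin n × Bool),
              (if I = ∅ then P * ∏ i ∈ I, pmGen i else 0) from
          Finset.sum_congr rfl fun I _ => by split <;> simp]
        rw [Finset.sum_ite_eq' Finset.univ (∅ : Finset (Fin n × Bool))]
        simp
      · rw [Finset.sum_congr rfl (fun I _ => Finset.sum_mul _ _ _), Finset.sum_comm]
        refine Finset.sum_congr rfl fun j _ => ?_
        rw [show (∑ I : Finset (Fin n × Bool),
            (if I = pair j then MvPolynomial.C (lam j) * σp j else 0) * ∏ i ∈ I, pmGen i)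
            = ∑ I : Finset (Fin n × Bool),
              (if I = pair j then (MvPolynomial.C (lam j) * σp j) * ∏ i ∈ I, pmGen i else 0)
            from Finset.sum_congr rfl fun I _ => by split <;> simp]
        rw [Finset.sum_ite_eq' Finset.univ (pair j)]
        simp only [Finset.mem_univ, if_true]
        rw [mul_assoc, key j]
    rw [expand]
    have : (∑ j : Fin n, MvPolynomial.C (lam j) * (1 - X j ^ (2 * d)))
        = (∑ j : Fin n, (MvPolynomial.C (lam j) : MvPolynomial (Fin n) ℝ))
          - ∑ j : Fin n, MvPolynomial.C (lam j) * X j ^ (2 * d) := by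
      rw [← Finset.sum_sub_distrib]
      exact Finset.sum_congr rfl fun j _ => by ring
    rw [this, hP, map_add, map_sum]
    abel
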